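/- Let m ≥ 1 and K a field of characteristic 0. Any subalgebra of UT2(G) generated by at most 2m+1 elements satisfies the identity [x1,x2][x3,x4]⋯[x_{4m+3},x_{4m+4}] = 0 (the product of any 2m+2 commutators of its elements vanishes). -/

import Mathlib

/-- Commutator `[a,b] = ab - ba`. -/
def br {R : Type*} [Ring R] (a b : R) : R := a * b - b * a

section Aux


open CliffordAlgebra DirectSum

variable {K V : Type*} [Field K] [CharZero K] [AddCommGroup V] [Module K V]

local notation "Q0" => (0 : QuadraticForm K V)
local notation "G" => CliffordAlgebra Q0

lemma swap_ι (a b : V) : ι Q0 a * ι Q0 b = -(ι Q0 b * ι Q0 a) :=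
  ι_mul_ι_comm_of_isOrtho (QuadraticMap.IsOrtho.all a b)

/-- products of two ι's are central -/
lemma pair_central (m₁ m₂ : V) (y : G) :
    (ι Q0 m₁ * ι Q0 m₂) * y = y * (ι Q0 m₁ * ι Q0 m₂) := by
  induction y using CliffordAlgebra.induction with
  | algebraMap r => rw [Algebra.commutes]
  | ι v =>
    rw [mul_assoc, swap_ι m₂ v, mul_neg, ← mul_assoc, swap_ι m₁ v, neg_mul, neg_neg,
      mul_assoc]
  | mul a b ha hb => rw [← mul_assoc, ha, mul_assoc, hb, ← mul_assoc]
  | add a b ha hb => rw [mul_add, add_mul, ha, hb]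

lemma even_central {x : G} (hx : x ∈ evenOdd Q0 0) (y : G) : x * y = y * x := by
  induction x, hx using even_induction with
  | algebraMap r => rw [Algebra.commutes]
  | add a b ha hb iha ihb => rw [add_mul, mul_add, iha, ihb]
  | ι_mul_ι_mul m₁ m₂ t ht iht =>
    rw [mul_assoc, iht, ← mul_assoc, pair_central, mul_assoc]

lemma odd_anticomm {x y : G} (hx : x ∈ evenOdd Q0 1) (hy : y ∈ evenOdd Q0 1) :
    x * y = -(y * x) := by
  induction x, hx using odd_induction with
  | ι v =>
    induction y, hy using odd_induction with
    | ι w => exact swap_ι v w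
    | add a b ha hb iha ihb => rw [mul_add, add_mul, iha, ihb, neg_add]
    | ι_mul_ι_mul m₁ m₂ t ht iht =>
      calc ι Q0 v * (ι Q0 m₁ * ι Q0 m₂ * t)
          = (ι Q0 m₁ * ι Q0 m₂) * (ι Q0 v * t) := by rw [← mul_assoc, ← pair_central m₁ m₂, mul_assoc]
        _ = -((ι Q0 m₁ * ι Q0 m₂ * t) * ι Q0 v) := by rw [iht, mul_neg]; simp only [mul_assoc]
  | add a b ha hb iha ihb => rw [add_mul, mul_add, iha, ihb, neg_add]
  | ι_mul_ι_mul m₁ m₂ t ht iht =>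
    calc ι Q0 m₁ * ι Q0 m₂ * t * y = ι Q0 m₁ * ι Q0 m₂ * (t * y) := by rw [mul_assoc]
      _ = -(ι Q0 m₁ * ι Q0 m₂ * (y * t)) := by rw [iht, mul_neg]
      _ = -(y * (ι Q0 m₁ * ι Q0 m₂ * t)) := by
            rw [← mul_assoc, pair_central m₁ m₂ y]; simp only [mul_assoc]

lemma half_cancel (x : G) (h : x + x = 0) : x = 0 := by
  have h2 : (2 : K) • x = 0 := by rw [two_smul]; exact h
  rcases smul_eq_zero.mp h2 with h | h
  · exact absurd h two_ne_zero
  · exact h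

lemma odd_sq_zero {x : G} (hx : x ∈ evenOdd Q0 1) : x * x = 0 :=
  half_cancel _ (by nth_rewrite 2 [odd_anticomm hx hx]; rw [add_neg_cancel])

lemma head_prod_zero {ι : Type*} (o : ι → G) (ho : ∀ i, o i ∈ evenOdd Q0 1)
    (i : ι) (l : List ι) (h : i ∈ l) : o i * (l.map o).prod = 0 := by
  induction l with
  | nil => simp at h
  | cons b t ih =>
    rw [List.map_cons, List.prod_cons, ← mul_assoc]
    rcases List.mem_cons.mp h with rfl | hmem
    · rw [odd_sq_zero (ho i), zero_mul]
    · rw [odd_anticomm (ho i) (ho b), neg_mul, mul_assoc, ih hmem, mul_zero, neg_zero]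

lemma prod_zero_of_dup {ι : Type*} (o : ι → G) (ho : ∀ i, o i ∈ evenOdd Q0 1)
    (l : List ι) (h : ¬ l.Nodup) : (l.map o).prod = 0 := by
  induction l with
  | nil => exact absurd List.nodup_nil h
  | cons a t ih =>
    rw [List.map_cons, List.prod_cons]
    by_cases ha : a ∈ t
    · exact head_prod_zero o ho a t ha
    · have ht : ¬ t.Nodup := fun hn => h (List.nodup_cons.mpr ⟨ha, hn⟩)
      rw [ih ht, mul_zero]

lemma prod_map_mem_evenOdd {ι : Type*} (o : ι → G) (ho : ∀ i, o i ∈ evenOdd Q0 1)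
    (l : List ι) : (l.map o).prod ∈ evenOdd Q0 (l.length : ZMod 2) := by
  induction l with
  | nil => simpa using SetLike.one_mem_graded (evenOdd Q0)
  | cons a t ih =>
    rw [List.map_cons, List.prod_cons]
    have : ((t.length + 1 : ℕ) : ZMod 2) = 1 + (t.length : ZMod 2) := by push_cast; ring
    rw [List.length_cons, this]
    exact SetLike.mul_mem_graded (ho a) ih

lemma decompose_two (x : G) :
    x = (decompose (evenOdd Q0) x 0 : G) + (decompose (evenOdd Q0) x 1 : G) := by
  haveI : ∀ (i : ZMod 2) (y : evenOdd Q0 i), Decidable (y ≠ 0) := fun _ _ => Classical.dec _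
  conv_lhs => rw [← DirectSum.sum_support_decompose (evenOdd Q0) x]
  rw [Finset.sum_subset (Finset.subset_univ _) (fun i _ hi => by
    rw [DFinsupp.notMem_support_iff.mp hi]; rfl)]
  have huniv : (Finset.univ : Finset (ZMod 2)) = {0, 1} := by decide
  rw [huniv, Finset.sum_insert (by decide), Finset.sum_singleton]

set_option maxHeartbeats 2000000 in
lemma grassmann_list (n : ℕ) (g : Fin n → G)
    (L : List G)
    (hL : ∀ x ∈ L, ∃ s ∈ Algebra.adjoin K (Set.range g), ∃ t ∈ Algebra.adjoin K (Set.range g),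
        x = br s t)
    (hlen : n + 1 ≤ 2 * L.length) : L.prod = 0 := by
  classical
  set o : Fin n → G := fun i => (decompose (evenOdd Q0) (g i) 1 : G) with ho_def
  have ho : ∀ i, o i ∈ evenOdd Q0 1 := fun i => (decompose (evenOdd Q0) (g i) 1).2
  set N : ℕ → Submodule K G := fun k =>
    Submodule.span K {x | ∃ u ∈ evenOdd Q0 0, ∃ l : List (Fin n),
      k ≤ l.length ∧ x = u * (l.map o).prod} with hN_def
  -- monotonicity
  have hmono : ∀ {j k : ℕ}, j ≤ k → N k ≤ N j := by
    intro j k hjk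
    exact Submodule.span_mono (fun x ⟨u, hu, l, hl, hx⟩ => ⟨u, hu, l, hjk.trans hl, hx⟩)
  -- multiplicativity
  have hmul : ∀ j k : ℕ, N j * N k ≤ N (j + k) := by
    intro j k
    rw [hN_def]
    rw [Submodule.span_mul_span]
    refine Submodule.span_le.2 ?_
    rintro z ⟨x, ⟨u, hu, l, hl, rfl⟩, y, ⟨u', hu', l', hl', rfl⟩, rfl⟩
    have hA : (l.map o).prod * u' = u' * (l.map o).prod := (even_central hu' _).symm
    have heq : (u * (l.map o).prod) * (u' * (l'.map o).prod)
        = (u * u') * (((l ++ l').map o).prod) := by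
      rw [List.map_append, List.prod_append]
      calc u * (l.map o).prod * (u' * (l'.map o).prod)
          = u * ((l.map o).prod * u' * (l'.map o).prod) := by simp only [mul_assoc]
        _ = u * (u' * (l.map o).prod * (l'.map o).prod) := by rw [hA]
        _ = u * u' * ((l.map o).prod * (l'.map o).prod) := by simp only [mul_assoc]
    refine Submodule.subset_span ⟨u * u', ?_, l ++ l', ?_, heq⟩
    · simpa using SetLike.mul_mem_graded hu hu'
    · rw [List.length_append]; omega
  -- adjoin ⊆ N 0
  have hS : ∀ s ∈ Algebra.adjoin K (Set.range g), s ∈ N 0 := by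
    intro s hs
    induction hs using Algebra.adjoin_induction with
    | mem x hx =>
      obtain ⟨i, rfl⟩ := hx
      rw [decompose_two (g i)]
      refine Submodule.add_mem _ ?_ ?_
      · exact Submodule.subset_span ⟨_, (decompose (evenOdd Q0) (g i) 0).2, [],
          by simp, by simp⟩
      · exact Submodule.subset_span ⟨1, SetLike.one_mem_graded _, [i], by simp,
          by simp [ho_def]⟩
    | algebraMap r =>
      exact Submodule.subset_span ⟨algebraMap K _ r, SetLike.algebraMap_mem_graded _ r, [],
        by simp, by simp⟩
    | add x y hx hy ihx ihy => exact Submodule.add_mem _ ihx ihy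
    | mul x y hx hy ihx ihy => exact hmul 0 0 (Submodule.mul_mem_mul ihx ihy)
  -- the odd projection maps N 0 into N 1
  set π : G →ₗ[K] G := (evenOdd Q0 1).subtype ∘ₗ
    (DirectSum.component K (ZMod 2) (fun i => evenOdd Q0 i) 1) ∘ₗ
    (DirectSum.decomposeAlgEquiv (evenOdd Q0)).toLinearMap with hπ_def
  have hπ_apply : ∀ x : G, π x = (decompose (evenOdd Q0) x 1 : G) := fun x => rfl
  have hπN : ∀ x ∈ N 0, π x ∈ N 1 := by
    intro x hx
    induction hx using Submodule.span_induction with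
    | mem x hx =>
      obtain ⟨u, hu, l, -, rfl⟩ := hx
      have hmem : u * (l.map o).prod ∈ evenOdd Q0 ((l.length : ℕ) : ZMod 2) := by
        simpa using SetLike.mul_mem_graded hu (prod_map_mem_evenOdd o ho l)
      by_cases hpar : ((l.length : ℕ) : ZMod 2) = 1
      · rw [hπ_apply, hpar ▸ hmem |> DirectSum.decompose_of_mem_same (evenOdd Q0)]
        refine Submodule.subset_span ⟨u, hu, l, ?_, rfl⟩
        rcases Nat.eq_zero_or_pos l.length with h0 | h1
        · rw [h0] at hpar; simp at hpar
        · exact h1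
      · rw [hπ_apply, DirectSum.decompose_of_mem_ne (evenOdd Q0) hmem hpar]
        exact Submodule.zero_mem _
    | zero => rw [map_zero]; exact Submodule.zero_mem _
    | add x y hx hy ihx ihy => rw [map_add]; exact Submodule.add_mem _ ihx ihy
    | smul c x hx ihx => rw [map_smul]; exact Submodule.smul_mem _ c ihx
  -- commutators lie in N 2
  have hbr : ∀ x ∈ L, x ∈ N 2 := by
    intro x hxL
    obtain ⟨s, hs, t, ht, rfl⟩ := hL x hxL
    set s1 := π s with hs1
    set t1 := π t with ht1
    have hs1m : s1 ∈ evenOdd Q0 1 := (decompose (evenOdd Q0) s 1).2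
    have ht1m : t1 ∈ evenOdd Q0 1 := (decompose (evenOdd Q0) t 1).2
    have hs0m : ((decompose (evenOdd Q0) s 0 : G)) ∈ evenOdd Q0 0 :=
      (decompose (evenOdd Q0) s 0).2
    have ht0m : ((decompose (evenOdd Q0) t 0 : G)) ∈ evenOdd Q0 0 :=
      (decompose (evenOdd Q0) t 0).2
    set s0 : G := ((decompose (evenOdd Q0) s 0 : G)) with hs0d
    set t0 : G := ((decompose (evenOdd Q0) t 0 : G)) with ht0d
    have hsd : s = s0 + s1 := decompose_two s
    have htd : t = t0 + t1 := decompose_two t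
    have key : br s t = s1 * t1 + s1 * t1 := by
      have c1 : s0 * t0 = t0 * s0 := even_central hs0m t0
      have c2 : s0 * t1 = t1 * s0 := even_central hs0m t1
      have c3 : t0 * s1 = s1 * t0 := even_central ht0m s1
      have c4 : t1 * s1 = -(s1 * t1) := odd_anticomm ht1m hs1m
      rw [br, hsd, htd]
      simp only [add_mul, mul_add]
      rw [c1, c2, c3, c4]
      abel
    rw [key]
    have h1 : s1 * t1 ∈ N 2 := hmul 1 1 (Submodule.mul_mem_mul (hπN s (hS s hs)) (hπN t (hS t ht)))
    exact Submodule.add_mem _ h1 h1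
  -- the product lies in N (2 * length)
  have hprod : ∀ L' : List G, (∀ x ∈ L', x ∈ N 2) → L'.prod ∈ N (2 * L'.length) := by
    intro L' hL'
    induction L' with
    | nil =>
      rw [List.prod_nil]
      exact Submodule.subset_span ⟨1, SetLike.one_mem_graded _, [], by simp, by simp⟩
    | cons a t iht =>
      rw [List.prod_cons, List.length_cons]
      have : 2 * (t.length + 1) = 2 + 2 * t.length := by ring
      rw [this]
      exact hmul 2 (2 * t.length) (Submodule.mul_mem_mul (hL' a List.mem_cons_self)
        (iht (fun x hx => hL' x (List.mem_cons_of_mem a hx))))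
  -- N (n + 1) = ⊥
  have hbot : N (n + 1) ≤ ⊥ := by
    refine Submodule.span_le.2 ?_
    rintro x ⟨u, hu, l, hl, rfl⟩
    have hnodup : ¬ l.Nodup := by
      intro hnd
      have := hnd.length_le_card
      simp [Fintype.card_fin] at this
      omega
    rw [prod_zero_of_dup o ho l hnodup, mul_zero]
    exact Submodule.zero_mem _
  have : L.prod ∈ N (n + 1) := hmono hlen (hprod L hbr)
  simpa using hbot this

section MatrixPart

variable {n : ℕ} (ξ : Fin n → Matrix (Fin 2) (Fin 2) (CliffordAlgebra (0 : QuadraticForm K V)))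

lemma matrix_adjoin_struct (hξ : ∀ i, ξ i 1 0 = 0) :
    ∀ {A : Matrix (Fin 2) (Fin 2) G}, A ∈ Algebra.adjoin K (Set.range ξ) →
    A 1 0 = 0 ∧ A 0 0 ∈ Algebra.adjoin K (Set.range (fun i => ξ i 0 0))
      ∧ A 1 1 ∈ Algebra.adjoin K (Set.range (fun i => ξ i 1 1)) := by
  intro A hA
  induction hA using Algebra.adjoin_induction with
  | mem x hx =>
    obtain ⟨i, rfl⟩ := hx
    exact ⟨hξ i, Algebra.subset_adjoin ⟨i, rfl⟩, Algebra.subset_adjoin ⟨i, rfl⟩⟩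
  | algebraMap r =>
    refine ⟨?_, ?_, ?_⟩
    · rw [Matrix.algebraMap_matrix_apply]; simp
    · rw [Matrix.algebraMap_matrix_apply, if_pos rfl]; exact Subalgebra.algebraMap_mem _ r
    · rw [Matrix.algebraMap_matrix_apply, if_pos rfl]; exact Subalgebra.algebraMap_mem _ r
  | add x y hx hy ihx ihy =>
    exact ⟨by rw [Matrix.add_apply, ihx.1, ihy.1, add_zero],
      Subalgebra.add_mem _ ihx.2.1 ihy.2.1, Subalgebra.add_mem _ ihx.2.2 ihy.2.2⟩
  | mul x y hx hy ihx ihy =>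
    refine ⟨?_, ?_, ?_⟩
    · rw [Matrix.mul_apply, Fin.sum_univ_two, ihx.1, ihy.1, zero_mul, mul_zero, add_zero]
    · rw [Matrix.mul_apply, Fin.sum_univ_two, ihy.1, mul_zero, add_zero]
      exact Subalgebra.mul_mem _ ihx.2.1 ihy.2.1
    · rw [Matrix.mul_apply, Fin.sum_univ_two, ihx.1, zero_mul, zero_add]
      exact Subalgebra.mul_mem _ ihx.2.2 ihy.2.2

lemma br_matrix_entries {A B : Matrix (Fin 2) (Fin 2) G} (hA : A 1 0 = 0) (hB : B 1 0 = 0) :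
    br A B 1 0 = 0 ∧ br A B 0 0 = br (A 0 0) (B 0 0) ∧ br A B 1 1 = br (A 1 1) (B 1 1) := by
  refine ⟨?_, ?_, ?_⟩ <;>
    simp [br, Matrix.sub_apply, Matrix.mul_apply, Fin.sum_univ_two, hA, hB]

lemma matrix_list_prod_entries (L : List (Matrix (Fin 2) (Fin 2) G))
    (h : ∀ A ∈ L, A 1 0 = 0) :
    L.prod 1 0 = 0 ∧ L.prod 0 0 = (L.map (fun A => A 0 0)).prod
      ∧ L.prod 1 1 = (L.map (fun A => A 1 1)).prod := by
  induction L with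
  | nil =>
    refine ⟨?_, ?_, ?_⟩ <;> simp [Matrix.one_apply]
  | cons A t ih =>
    have hA := h A List.mem_cons_self
    obtain ⟨ih1, ih2, ih3⟩ := ih (fun B hB => h B (List.mem_cons_of_mem A hB))
    rw [List.prod_cons, List.map_cons, List.map_cons, List.prod_cons, List.prod_cons]
    refine ⟨?_, ?_, ?_⟩
    · rw [Matrix.mul_apply, Fin.sum_univ_two, hA, ih1, zero_mul, mul_zero, add_zero]
    · rw [Matrix.mul_apply, Fin.sum_univ_two, ih1, mul_zero, add_zero, ih2]
    · rw [Matrix.mul_apply, Fin.sum_univ_two, hA, zero_mul, zero_add, ih3]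

end MatrixPart


end Aux

set_option maxHeartbeats 1000000 in
/-- Let `G` be the Grassmann algebra of an infinite-dimensional vector space over a field of
characteristic zero and `m ≥ 1`.  Any subalgebra of `UT2(G)` generated by at most `2m+1`
elements satisfies `[x1,x2][x3,x4]⋯[x_{4m+3},x_{4m+4}] = 0`: every product of `2m+2`
commutators of its elements vanishes. -/
theorem stmt17 {K V : Type*} [Field K] [CharZero K] [AddCommGroup V] [Module K V]
    (hV : ¬ Module.Finite K V) (m : ℕ) (hm : 1 ≤ m)
    (ξ : Fin (2 * m + 1) → Matrix (Fin 2) (Fin 2) (ExteriorAlgebra K V))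
    (hξ : ∀ i, ξ i 1 0 = 0)
    (a : ℕ → Matrix (Fin 2) (Fin 2) (ExteriorAlgebra K V))
    (ha : ∀ i, a i ∈ Algebra.adjoin K (Set.range ξ)) :
    (List.ofFn (fun i : Fin (2 * m + 2) => br (a (2 * i)) (a (2 * i + 1)))).prod = 0 := by
  classical
  set L : List (Matrix (Fin 2) (Fin 2) (ExteriorAlgebra K V)) :=
    List.ofFn (fun i : Fin (2 * m + 2) => br (a (2 * i)) (a (2 * i + 1))) with hL
  have hmemL : ∀ X ∈ L, ∃ s ∈ Algebra.adjoin K (Set.range ξ),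
      ∃ t ∈ Algebra.adjoin K (Set.range ξ), X = br s t := by
    intro X hX
    rw [hL, List.mem_ofFn] at hX
    obtain ⟨i, rfl⟩ := hX
    exact ⟨_, ha _, _, ha _, rfl⟩
  have hhalf : ∀ L' : List (Matrix (Fin 2) (Fin 2) (ExteriorAlgebra K V)),
      (∀ X ∈ L', ∃ s ∈ Algebra.adjoin K (Set.range ξ),
        ∃ t ∈ Algebra.adjoin K (Set.range ξ), X = br s t) →
      m + 1 ≤ L'.length →
      L'.prod 1 0 = 0 ∧ L'.prod 0 0 = 0 ∧ L'.prod 1 1 = 0 := by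
    intro L' hL' hlen
    have h10 : ∀ X ∈ L', X 1 0 = 0 := by
      intro X hX
      obtain ⟨s, hs, t, ht, rfl⟩ := hL' X hX
      exact (br_matrix_entries (matrix_adjoin_struct ξ hξ hs).1
        (matrix_adjoin_struct ξ hξ ht).1).1
    obtain ⟨e1, e2, e3⟩ := matrix_list_prod_entries L' h10
    refine ⟨e1, ?_, ?_⟩
    · rw [e2]
      refine grassmann_list (2 * m + 1) (fun i => ξ i 0 0) _ ?_ ?_
      · intro x hx
        obtain ⟨X, hX, rfl⟩ := List.mem_map.mp hx
        obtain ⟨s, hs, t, ht, rfl⟩ := hL' X hX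
        have es := matrix_adjoin_struct ξ hξ hs
        have et := matrix_adjoin_struct ξ hξ ht
        exact ⟨s 0 0, es.2.1, t 0 0, et.2.1, (br_matrix_entries es.1 et.1).2.1⟩
      · rw [List.length_map]; omega
    · rw [e3]
      refine grassmann_list (2 * m + 1) (fun i => ξ i 1 1) _ ?_ ?_
      · intro x hx
        obtain ⟨X, hX, rfl⟩ := List.mem_map.mp hx
        obtain ⟨s, hs, t, ht, rfl⟩ := hL' X hX
        have es := matrix_adjoin_struct ξ hξ hs
        have et := matrix_adjoin_struct ξ hξ ht
        exact ⟨s 1 1, es.2.2, t 1 1, et.2.2, (br_matrix_entries es.1 et.1).2.2⟩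
      · rw [List.length_map]; omega
  have hlenL : L.length = 2 * m + 2 := by rw [hL, List.length_ofFn]
  have ht_len : (L.take (m + 1)).length = m + 1 := by rw [List.length_take]; omega
  have hd_len : (L.drop (m + 1)).length = m + 1 := by rw [List.length_drop]; omega
  obtain ⟨A1, A2, A3⟩ := hhalf (L.take (m + 1))
    (fun X hX => hmemL X (List.mem_of_mem_take hX)) ht_len.ge
  obtain ⟨B1, B2, B3⟩ := hhalf (L.drop (m + 1))
    (fun X hX => hmemL X (List.mem_of_mem_drop hX)) hd_len.ge
  calc L.prod = (L.take (m + 1)).prod * (L.drop (m + 1)).prod := by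
        rw [← List.prod_append, List.take_append_drop]
    _ = 0 := by
        ext i j
        fin_cases i <;> fin_cases j <;>
          simp [Matrix.mul_apply, Fin.sum_univ_two, A1, A2, A3, B1, B2, B3]
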